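/- Let k ≥ 2 and let t, i, I be integers with t ≥ 1−k, i ≥ 1 and i ≤ I ≤ i+k−1. Then (t+1)·Σ_{h' ∈ H_{I−i, k−1}} κ(t+k−1, k−1, h') + Σ_{h'' ∈ H_{I−i−1, k−1}} κ(t+k−1, k−1, h'') = Σ_{h ∈ H_{I−i, k}} κ(t+k−1, k, h), where a sum over the empty set equals 0. -/

import Mathlib

/-- `H_{ℓ,k}`: tuples `(h₀, …, h_ℓ)` of positive integers with `h₀ + ⋯ + h_ℓ = k`. -/
def Hset (ℓ k : ℕ) : Finset (Fin (ℓ + 1) → ℕ) :=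
  (Fintype.piFinset fun _ : Fin (ℓ + 1) => Finset.Icc 1 k).filter (fun h => ∑ i, h i = k)

/-- `κ(T,k,h) = (T(T-1)⋯(T-k+2)) / ∏_{i=0}^{ℓ-1} (T+1-∑_{j≤i} h_j)`, with the
convention that a factor vanishing in both numerator and denominator is omitted
from both: since the denominator factors are distinct factors of the numerator,
this equals the product of the remaining numerator factors. -/
def kappa (T : ℤ) (k : ℕ) {ℓ : ℕ} (h : Fin (ℓ + 1) → ℕ) : ℤ :=
  ∏ m ∈ Finset.range (k - 1) \
      ((Finset.range ℓ).image fun i =>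
        (∑ j ∈ Finset.univ.filter (fun j : Fin (ℓ + 1) => (j : ℕ) ≤ i), h j) - 1),
    (T - (m : ℤ))

open Finset

/-- The set of (partial sums − 1) appearing in the denominator of `κ`. -/
def Sset (ℓ : ℕ) (h : Fin (ℓ + 1) → ℕ) : Finset ℕ :=
  (Finset.range ℓ).image fun i =>
    (∑ j ∈ Finset.univ.filter (fun j : Fin (ℓ + 1) => (j : ℕ) ≤ i), h j) - 1

lemma kappa_eq (T : ℤ) (k ℓ : ℕ) (h : Fin (ℓ + 1) → ℕ) :
    kappa T k h = ∏ m ∈ Finset.range (k - 1) \ Sset ℓ h, (T - (m : ℤ)) := rfl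

lemma mem_Hset {ℓ n : ℕ} {h : Fin (ℓ + 1) → ℕ} :
    h ∈ Hset ℓ n ↔ (∀ j, 1 ≤ h j) ∧ ∑ j, h j = n := by
  simp only [Hset, mem_filter, Fintype.mem_piFinset, mem_Icc]
  constructor
  · rintro ⟨h1, h2⟩
    exact ⟨fun j => (h1 j).1, h2⟩
  · rintro ⟨h1, h2⟩
    refine ⟨fun j => ⟨h1 j, ?_⟩, h2⟩
    calc h j ≤ ∑ j, h j := Finset.single_le_sum (fun _ _ => Nat.zero_le _) (mem_univ j)
      _ = n := h2

lemma Sset_bound {ℓ n : ℕ} {h : Fin (ℓ + 1) → ℕ} (h1 : ∀ j, 1 ≤ h j) (h2 : ∑ j, h j = n) :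
    ∀ x ∈ Sset ℓ h, x < n - 1 := by
  intro x hx
  simp only [Sset, mem_image, mem_range] at hx
  obtain ⟨i, hi, rfl⟩ := hx
  set s := ∑ j ∈ Finset.univ.filter (fun j : Fin (ℓ + 1) => (j : ℕ) ≤ i), h j with hs
  have h0mem : (0 : Fin (ℓ + 1)) ∈ Finset.univ.filter (fun j : Fin (ℓ + 1) => (j : ℕ) ≤ i) := by
    simp
  have hs1 : 1 ≤ s := le_trans (h1 0)
    (Finset.single_le_sum (fun _ _ => Nat.zero_le _) h0mem)
  have hlast : Fin.last ℓ ∉ Finset.univ.filter (fun j : Fin (ℓ + 1) => (j : ℕ) ≤ i) := by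
    simp only [mem_filter, mem_univ, true_and, Fin.val_last]
    omega
  have hs2 : s + h (Fin.last ℓ) ≤ n := by
    have e1 : h (Fin.last ℓ) + s
        = ∑ j ∈ insert (Fin.last ℓ) (Finset.univ.filter (fun j : Fin (ℓ + 1) => (j : ℕ) ≤ i)),
            h j := (Finset.sum_insert hlast).symm
    have e2 : ∑ j ∈ insert (Fin.last ℓ) (Finset.univ.filter (fun j : Fin (ℓ + 1) => (j : ℕ) ≤ i)),
        h j ≤ ∑ j, h j :=
      Finset.sum_le_sum_of_subset (Finset.subset_univ _)
    omega
  have := h1 (Fin.last ℓ)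
  omega

lemma sum_filter_snoc (n : ℕ) (g : Fin (n + 1) → ℕ) (a i : ℕ) :
    ∑ j ∈ Finset.univ.filter (fun j : Fin (n + 2) => (j : ℕ) ≤ i), Fin.snoc g a j
      = (∑ j ∈ Finset.univ.filter (fun j : Fin (n + 1) => (j : ℕ) ≤ i), g j)
        + if n + 1 ≤ i then a else 0 := by
  rw [Finset.sum_filter, Finset.sum_filter, Fin.sum_univ_castSucc]
  simp [Fin.snoc_castSucc, Fin.snoc_last, Fin.val_last]

lemma Sset_snoc (ℓ : ℕ) (g : Fin (ℓ + 1) → ℕ) :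
    Sset (ℓ + 1) (Fin.snoc g 1) = insert ((∑ j, g j) - 1) (Sset ℓ g) := by
  unfold Sset
  rw [Finset.range_add_one, Finset.image_insert]
  congr 1
  · show (∑ j ∈ Finset.univ.filter (fun j : Fin (ℓ + 2) => (j : ℕ) ≤ ℓ), Fin.snoc g 1 j) - 1 = _
    rw [sum_filter_snoc, if_neg (by omega)]
    have huniv : Finset.univ.filter (fun j : Fin (ℓ + 1) => (j : ℕ) ≤ ℓ) = Finset.univ :=
      Finset.filter_true_of_mem (fun j _ => Fin.is_le j)
    rw [huniv]
    simp
  · apply Finset.image_congr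
    intro x hx
    simp only [Finset.coe_range, Set.mem_Iio] at hx
    show (∑ j ∈ Finset.univ.filter (fun j : Fin (ℓ + 2) => (j : ℕ) ≤ x), Fin.snoc g 1 j) - 1 = _
    rw [sum_filter_snoc, if_neg (by omega)]
    simp

lemma Sset_update (ℓ : ℕ) (h : Fin (ℓ + 1) → ℕ) (v : ℕ) :
    Sset ℓ (Function.update h (Fin.last ℓ) v) = Sset ℓ h := by
  unfold Sset
  apply Finset.image_congr
  intro x hx
  simp only [Finset.coe_range, Set.mem_Iio] at hx
  show (∑ j ∈ Finset.univ.filter (fun j : Fin (ℓ + 1) => (j : ℕ) ≤ x),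
      Function.update h (Fin.last ℓ) v j) - 1 = _
  congr 1
  apply Finset.sum_congr rfl
  intro j hj
  simp only [mem_filter, mem_univ, true_and] at hj
  apply Function.update_of_ne
  intro e
  rw [e] at hj
  simp only [Fin.val_last] at hj
  omega

lemma prodA (k : ℕ) (hk : 2 ≤ k) (S : Finset ℕ) (hS : ∀ x ∈ S, x < k - 2) (T : ℤ) :
    ∏ m ∈ Finset.range (k - 1) \ S, (T - (m : ℤ))
      = (T - ((k : ℤ) - 2)) * ∏ m ∈ Finset.range (k - 2) \ S, (T - (m : ℤ)) := by
  have h1 : Finset.range (k - 1) \ S = insert (k - 2) (Finset.range (k - 2) \ S) := by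
    ext m
    simp only [mem_sdiff, mem_range, mem_insert]
    constructor
    · rintro ⟨hm1, hm2⟩
      rcases eq_or_ne m (k - 2) with rfl | hne
      · exact Or.inl rfl
      · exact Or.inr ⟨by omega, hm2⟩
    · rintro (rfl | ⟨hm1, hm2⟩)
      · exact ⟨by omega, fun hx => absurd (hS _ hx) (by omega)⟩
      · exact ⟨by omega, hm2⟩
  rw [h1, Finset.prod_insert (by simp)]
  congr 2
  have : ((2 : ℕ) : ℤ) ≤ (k : ℤ) := by exact_mod_cast hk
  push_cast [Nat.cast_sub hk]
  ring

lemma prodB (k : ℕ) (hk : 2 ≤ k) (S : Finset ℕ) (T : ℤ) :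
    ∏ m ∈ Finset.range (k - 1) \ insert (k - 2) S, (T - (m : ℤ))
      = ∏ m ∈ Finset.range (k - 2) \ S, (T - (m : ℤ)) := by
  congr 1
  ext m
  simp only [mem_sdiff, mem_range, mem_insert, not_or]
  constructor
  · rintro ⟨hm1, hm2, hm3⟩
    exact ⟨by omega, hm3⟩
  · rintro ⟨hm1, hm2⟩
    exact ⟨by omega, by omega, hm2⟩

lemma sum_update_last (ℓ : ℕ) (f : Fin (ℓ + 1) → ℕ) (b : ℕ) :
    (∑ j, Function.update f (Fin.last ℓ) b j) + f (Fin.last ℓ) = (∑ j, f j) + b := by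
  rw [Finset.sum_update_of_mem (mem_univ _)]
  have e1 : (∑ j ∈ Finset.univ.erase (Fin.last ℓ), f j) + f (Fin.last ℓ) = ∑ j, f j :=
    Finset.sum_erase_add _ _ (mem_univ _)
  have e2 : Finset.univ \ {Fin.last ℓ} = Finset.univ.erase (Fin.last ℓ) := by
    rw [Finset.sdiff_singleton_eq_erase]
  rw [e2]
  omega

lemma keyA (k ℓ : ℕ) (hk : 2 ≤ k) (T : ℤ) :
    ∑ h ∈ (Hset ℓ k).filter (fun h => 2 ≤ h (Fin.last ℓ)), kappa T k h
      = (T - ((k : ℤ) - 2)) * ∑ h ∈ Hset ℓ (k - 1), kappa T (k - 1) h := by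
  rw [Finset.mul_sum]
  symm
  apply Finset.sum_nbij'
    (i := fun h => Function.update h (Fin.last ℓ) (h (Fin.last ℓ) + 1))
    (j := fun h => Function.update h (Fin.last ℓ) (h (Fin.last ℓ) - 1))
  · intro a ha
    obtain ⟨ha1, ha2⟩ := mem_Hset.mp ha
    rw [mem_filter]
    constructor
    · rw [mem_Hset]
      constructor
      · intro j
        rcases eq_or_ne j (Fin.last ℓ) with rfl | hne
        · rw [Function.update_self]; omega
        · rw [Function.update_of_ne hne]; exact ha1 j
      · have := sum_update_last ℓ a (a (Fin.last ℓ) + 1)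
        omega
    · rw [Function.update_self]
      have := ha1 (Fin.last ℓ)
      omega
  · intro b hb
    rw [mem_filter] at hb
    obtain ⟨hb0, hb2⟩ := hb
    obtain ⟨hb1, hbs⟩ := mem_Hset.mp hb0
    rw [mem_Hset]
    constructor
    · intro j
      rcases eq_or_ne j (Fin.last ℓ) with rfl | hne
      · rw [Function.update_self]; omega
      · rw [Function.update_of_ne hne]; exact hb1 j
    · have := sum_update_last ℓ b (b (Fin.last ℓ) - 1)
      omega
  · intro a ha
    funext j
    rcases eq_or_ne j (Fin.last ℓ) with rfl | hne
    · simp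
    · simp [Function.update_of_ne hne]
  · intro b hb
    rw [mem_filter] at hb
    have h2 := hb.2
    funext j
    rcases eq_or_ne j (Fin.last ℓ) with rfl | hne
    · simp only [Function.update_self]
      omega
    · simp [Function.update_of_ne hne]
  · intro a ha
    obtain ⟨ha1, ha2⟩ := mem_Hset.mp ha
    rw [kappa_eq, kappa_eq, Sset_update]
    have hb : ∀ x ∈ Sset ℓ a, x < k - 2 := by
      intro x hx
      have := Sset_bound ha1 ha2 x hx
      omega
    rw [show k - 1 - 1 = k - 2 from by omega]
    exact (prodA k hk (Sset ℓ a) hb T).symm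

lemma keyB (k ℓ : ℕ) (hk : 2 ≤ k) (T : ℤ) :
    ∑ h ∈ (Hset (ℓ + 1) k).filter (fun h => ¬ 2 ≤ h (Fin.last (ℓ + 1))), kappa T k h
      = ∑ h ∈ Hset ℓ (k - 1), kappa T (k - 1) h := by
  symm
  refine Finset.sum_nbij' (i := fun g : Fin (ℓ + 1) → ℕ => Fin.snoc g 1)
    (j := fun h : Fin (ℓ + 2) → ℕ => Fin.init h) ?_ ?_ ?_ ?_ ?_
  · intro a ha
    obtain ⟨ha1, ha2⟩ := mem_Hset.mp ha
    rw [mem_filter]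
    constructor
    · rw [mem_Hset]
      constructor
      · intro j
        induction j using Fin.lastCases with
        | last => simp
        | cast j => simpa using ha1 j
      · rw [Fin.sum_univ_castSucc]
        simp only [Fin.snoc_castSucc, Fin.snoc_last]
        omega
    · simp
  · intro b hb
    rw [mem_filter] at hb
    obtain ⟨hb0, hb2⟩ := hb
    obtain ⟨hb1, hbs⟩ := mem_Hset.mp hb0
    have hblast : b (Fin.last (ℓ + 1)) = 1 := by
      have := hb1 (Fin.last (ℓ + 1)); omega
    rw [mem_Hset]
    constructor
    · intro j
      exact hb1 _
    · rw [Fin.sum_univ_castSucc] at hbs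
      have e : ∑ j : Fin (ℓ + 1), Fin.init b j = ∑ j : Fin (ℓ + 1), b j.castSucc := rfl
      rw [e]
      omega
  · intro a ha
    simp
  · intro b hb
    rw [mem_filter] at hb
    obtain ⟨hb0, hb2⟩ := hb
    obtain ⟨hb1, hbs⟩ := mem_Hset.mp hb0
    have hblast : b (Fin.last (ℓ + 1)) = 1 := by
      have := hb1 (Fin.last (ℓ + 1)); omega
    have hself := Fin.snoc_init_self b
    rw [hblast] at hself
    exact hself
  · intro a ha
    obtain ⟨ha1, ha2⟩ := mem_Hset.mp ha
    rw [kappa_eq, kappa_eq, Sset_snoc, ha2]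
    rw [show k - 1 - 1 = k - 2 from by omega]
    exact (prodB k hk (Sset ℓ a) T).symm

/-- Eq. (eqch4) of the paper:
`(t+1) ∑_{h' ∈ H_{I-i,k-1}} κ(t+k-1,k-1,h') + ∑_{h'' ∈ H_{I-i-1,k-1}} κ(t+k-1,k-1,h'')`
`= ∑_{h ∈ H_{I-i,k}} κ(t+k-1,k,h)` (the second sum, over `H_{-1,k-1} = ∅` when
`I = i`, is `0`). -/
theorem stmt12 (k : ℕ) (hk : 2 ≤ k) (t : ℤ) (ht : 1 - (k : ℤ) ≤ t) (i I : ℕ)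
    (hi : 1 ≤ i) (hiI : i ≤ I) (hIk : I ≤ i + k - 1) :
    (t + 1) * (∑ h ∈ Hset (I - i) (k - 1), kappa (t + (k : ℤ) - 1) (k - 1) h)
      + (if i < I then ∑ h ∈ Hset (I - i - 1) (k - 1), kappa (t + (k : ℤ) - 1) (k - 1) h else 0)
      = ∑ h ∈ Hset (I - i) k, kappa (t + (k : ℤ) - 1) k h := by
  have hT : (t + 1) = (t + (k : ℤ) - 1) - ((k : ℤ) - 2) := by ring
  by_cases hlt : i < I
  · rw [if_pos hlt]
    obtain ⟨m, rfl⟩ : ∃ m, I = i + (m + 1) := ⟨I - i - 1, by omega⟩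
    have e2 : i + (m + 1) - i - 1 = m := by omega
    have e1 : i + (m + 1) - i = m + 1 := by omega
    rw [e2, e1]
    rw [← Finset.sum_filter_add_sum_filter_not (Hset (m + 1) k)
      (fun h => 2 ≤ h (Fin.last (m + 1)))]
    rw [keyA k (m + 1) hk, keyB k m hk, hT]
  · rw [if_neg hlt]
    have h0 : I - i = 0 := by omega
    rw [h0]
    rw [← Finset.sum_filter_add_sum_filter_not (Hset 0 k)
      (fun h => 2 ≤ h (Fin.last 0))]
    have hempty : (Hset 0 k).filter (fun h => ¬ 2 ≤ h (Fin.last 0)) = ∅ := by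
      rw [Finset.filter_eq_empty_iff]
      intro h hmem
      obtain ⟨h1, h2⟩ := mem_Hset.mp hmem
      rw [Fin.sum_univ_one] at h2
      exact not_not_intro (by rw [show Fin.last 0 = 0 from rfl, h2]; exact hk)
    rw [hempty, Finset.sum_empty, keyA k 0 hk, hT, add_zero]
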